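/- Let n ≥ 1, p ∈ (1,∞), let q, d ∈ ℝⁿ with q ≠ 0 and ⟨d, q⟩ ≠ 0, write q̂ = q/|q| and cos θ = ⟨d,q⟩/(|d||q|), and suppose (cos θ)·log|q| ≤ 0. Let X ∈ Sⁿ be decomposed as X = X⁺ − X⁻ with X⁺, X⁻ positive semidefinite and X⁺X⁻ = 0, and let λ₀, Λ₀ > 0 satisfy λ₀ ≤ min{1, p−1}/(|d|·|cos θ|) and Λ₀ ≥ max{1, p−1}/(|d|·|cos θ|). If Tr(X) + (p − 2)⟨X q̂, q̂⟩ + (log|q|)·⟨d, q⟩ ≥ 0, then Λ₀·Tr(X⁺) − λ₀·Tr(X⁻) − |q|·|log|q|| ≥ 0. -/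

import Mathlib

open Matrix

noncomputable section

set_option maxHeartbeats 1000000 in
lemma quad_aux {n : ℕ} (M : Matrix (Fin n) (Fin n) ℝ)
    (hM : M.PosSemidef) (w : Fin n → ℝ) (hw : ∑ i, w i ^ 2 = 1) :
    0 ≤ (∑ i, ∑ j, M i j * w i * w j) ∧
    (∑ i, ∑ j, M i j * w i * w j) ≤ M.trace ∧ 0 ≤ M.trace := by
  obtain ⟨B, hsym, hBB⟩ : ∃ B : Matrix (Fin n) (Fin n) ℝ,
      (∀ i j, B i j = B j i) ∧ B * B = M := by
    open scoped MatrixOrder in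
    refine ⟨CFC.sqrt M, fun i j => ?_, CFC.sqrt_mul_sqrt_self M hM.nonneg⟩
    open scoped MatrixOrder in
    have h2 := (CFC.sqrt_nonneg M).posSemidef.1.apply i j
    rw [star_trivial] at h2
    exact h2.symm
  have key1 : (∑ i, ∑ j, M i j * w i * w j) = ∑ k, (∑ i, B k i * w i) ^ 2 := by
    have e1 : (∑ i, ∑ j, M i j * w i * w j) = w ⬝ᵥ (M *ᵥ w) := by
      simp only [dotProduct, Matrix.mulVec, Finset.mul_sum]
      exact Finset.sum_congr rfl fun i _ => Finset.sum_congr rfl fun j _ => by ring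
    have e2 : w ᵥ* B = B *ᵥ w := by
      funext k
      simp only [Matrix.vecMul, Matrix.mulVec, dotProduct]
      exact Finset.sum_congr rfl fun i _ => by rw [hsym k i]; ring
    rw [e1, ← hBB, ← Matrix.mulVec_mulVec, Matrix.dotProduct_mulVec, e2]
    simp only [dotProduct, Matrix.mulVec, sq]
  have key2 : M.trace = ∑ k, ∑ i, (B k i) ^ 2 := by
    rw [Matrix.trace, ← hBB]
    refine Finset.sum_congr rfl fun i _ => ?_
    simp only [Matrix.diag_apply, Matrix.mul_apply]
    refine Finset.sum_congr rfl fun k _ => ?_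
    rw [hsym k i]; ring
  refine ⟨?_, ?_, ?_⟩
  · rw [key1]; positivity
  · rw [key1, key2]
    refine Finset.sum_le_sum fun k _ => ?_
    calc (∑ i, B k i * w i) ^ 2 ≤ (∑ i, B k i ^ 2) * ∑ i, w i ^ 2 :=
          Finset.sum_mul_sq_le_sq_mul_sq _ _ _
      _ = ∑ i, B k i ^ 2 := by rw [hw, mul_one]
  · rw [key2]; positivity

set_option maxHeartbeats 1000000 in
theorem pLaplace_implies_Pucci_structure_sign_condition {n : ℕ} (hn : 1 ≤ n)
    (p : ℝ) (hp : 1 < p)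
    (q d : EuclideanSpace ℝ (Fin n)) (hq : q ≠ 0)
    (hdq : (∑ i, d i * q i) ≠ 0)
    (hsign : ((∑ i, d i * q i) / (‖d‖ * ‖q‖)) * Real.log ‖q‖ ≤ 0)
    (X Xp Xm : Matrix (Fin n) (Fin n) ℝ)
    (hXsymm : X.IsSymm)
    (hX : X = Xp - Xm)
    (hXp : Xp.PosSemidef) (hXm : Xm.PosSemidef) (hortho : Xp * Xm = 0)
    (lam0 Lam0 : ℝ) (hlam0pos : 0 < lam0) (hLam0pos : 0 < Lam0)
    (hlam0 : lam0 ≤ min 1 (p - 1) / (‖d‖ * |(∑ i, d i * q i) / (‖d‖ * ‖q‖)|))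
    (hLam0 : max 1 (p - 1) / (‖d‖ * |(∑ i, d i * q i) / (‖d‖ * ‖q‖)|) ≤ Lam0)
    (h : 0 ≤ X.trace
        + (p - 2) * (∑ i, ∑ j, X i j * (q i / ‖q‖) * (q j / ‖q‖))
        + Real.log ‖q‖ * (∑ i, d i * q i)) :
    0 ≤ Lam0 * Xp.trace - lam0 * Xm.trace - ‖q‖ * |Real.log ‖q‖| := by
  set s : ℝ := ∑ i, d i * q i with hs
  set c : ℝ := s / (‖d‖ * ‖q‖) with hc
  have hqpos : (0:ℝ) < ‖q‖ := norm_pos_iff.2 hq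
  have hd : d ≠ 0 := by
    intro h0; apply hdq; simp [hs, h0]
  have hdpos : (0:ℝ) < ‖d‖ := norm_pos_iff.2 hd
  have hden : ‖d‖ * ‖q‖ ≠ 0 := by positivity
  have hsc : s = c * (‖d‖ * ‖q‖) := by
    rw [hc, div_mul_cancel₀ _ hden]
  have hcne : c ≠ 0 := by
    intro h0; apply hdq; rw [hsc, h0, zero_mul]
  have hk : (0:ℝ) < ‖d‖ * |c| := by positivity
  set w : Fin n → ℝ := fun i => q i / ‖q‖ with hwdef
  have hnq : ‖q‖ ^ 2 = ∑ i, (q i) ^ 2 := by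
    rw [EuclideanSpace.norm_eq, Real.sq_sqrt (by positivity)]
    simp [sq_abs]
  have hw : ∑ i, w i ^ 2 = 1 := by
    simp only [hwdef, div_pow, ← Finset.sum_div, ← hnq]
    field_simp
  obtain ⟨hQp0, hQp1, hTp⟩ := quad_aux Xp hXp w hw
  obtain ⟨hQm0, hQm1, hTm⟩ := quad_aux Xm hXm w hw
  set L : ℝ := Real.log ‖q‖ with hL
  have hLs : L * s = -(|L| * (‖d‖ * |c| * ‖q‖)) := by
    have h1 : c * L ≤ 0 := hsign
    have e : L * s = (c * L) * (‖d‖ * ‖q‖) := by rw [hsc]; ring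
    rw [e]
    have habs : |(c * L) * (‖d‖ * ‖q‖)| = |L| * (‖d‖ * |c| * ‖q‖) := by
      rw [abs_mul, abs_mul c L, abs_mul ‖d‖ ‖q‖, abs_of_pos hqpos, abs_of_pos hdpos]
      ring
    rw [← habs, abs_of_nonpos (by nlinarith [mul_pos hdpos hqpos])]
    ring
  have hQsplit : (∑ i, ∑ j, X i j * (q i / ‖q‖) * (q j / ‖q‖))
      = (∑ i, ∑ j, Xp i j * w i * w j) - (∑ i, ∑ j, Xm i j * w i * w j) := by
    rw [hX]
    simp [Matrix.sub_apply, sub_mul, Finset.sum_sub_distrib, hwdef]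
  have hTsplit : X.trace = Xp.trace - Xm.trace := by rw [hX, Matrix.trace_sub]
  set a := Xp.trace
  set b := Xm.trace
  set α := ∑ i, ∑ j, Xp i j * w i * w j
  set β := ∑ i, ∑ j, Xm i j * w i * w j
  have hmain : |L| * (‖d‖ * |c| * ‖q‖) ≤ (a - b) + (p - 2) * (α - β) := by
    have h2 := h
    rw [hTsplit, hQsplit, hLs] at h2
    linarith
  have hpucci : (a - b) + (p - 2) * (α - β) ≤ max 1 (p-1) * a - min 1 (p-1) * b := by
    rcases le_total p 2 with hp2 | hp2
    · rw [max_eq_left (by linarith), min_eq_right (by linarith)]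
      nlinarith
    · rw [max_eq_right (by linarith), min_eq_left (by linarith)]
      nlinarith
  have h3 : ‖q‖ * |L| ≤ (max 1 (p-1) / (‖d‖ * |c|)) * a - (min 1 (p-1) / (‖d‖ * |c|)) * b := by
    rw [div_mul_eq_mul_div, div_mul_eq_mul_div, ← sub_div, le_div_iff₀ hk]
    nlinarith
  have hLamStep : (max 1 (p-1) / (‖d‖ * |c|)) * a ≤ Lam0 * a :=
    mul_le_mul_of_nonneg_right hLam0 hTp
  have hlamStep : lam0 * b ≤ (min 1 (p-1) / (‖d‖ * |c|)) * b :=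
    mul_le_mul_of_nonneg_right hlam0 hTm
  linarith
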